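/- Let p and q be coprime integers with p > q > 1. For every n ∈ ℕ and every ω-word w with all digits in {0,…,q−1}: (a) there exists a unique ω-word v with all digits in {0,…,q−1} for which there is a sequence of states m_0 = n, m_1, m_2, ⋯ in ℕ with q·m_{k+1} = p·m_k + (v_{k+1} − w_{k+1}) + (p − q) for all k ≥ 0; and (b) there exists a unique ω-word u with all digits in {0,…,q−1} for which there is a sequence of states m_0 = n, m_1, m_2, ⋯ in ℕ with q·m_{k+1} = p·m_k + (w_{k+1} − u_{k+1}) + (p − q) for all k ≥ 0. (Consequently the transducer D_{p/q} realises a bijection of {0,…,q−1}^ω onto itself.) -/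

import Mathlib

/-- `w` labels a branch of the base-p/q automaton with digit set `E` from state `n`:
there are states `s 0 = n, s 1, s 2, …` with `q·s(k+1) = p·s k + w k` and `w k ∈ E`. -/
def IsBranch (p q : ℕ) (E : Set ℤ) (n : ℕ) (w : ℕ → ℤ) : Prop :=
  ∃ s : ℕ → ℕ, s 0 = n ∧ ∀ k : ℕ, (q : ℤ) * s (k + 1) = p * s k + w k ∧ w k ∈ E

/-- `u` (a word of length `ℓ`) labels a path from `n` to `m` in the base-p/q automaton
with digit set `E`. -/
def IsPath (p q : ℕ) (E : Set ℤ) (n m ℓ : ℕ) (u : ℕ → ℤ) : Prop :=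
  ∃ s : ℕ → ℕ, s 0 = n ∧ s ℓ = m ∧
    ∀ k < ℓ, (q : ℤ) * s (k + 1) = p * s k + u k ∧ u k ∈ E

/-- The canonical digit alphabet `A_p = {0, 1, …, p−1}`. -/
def Ap (p : ℕ) : Set ℤ := Set.Icc 0 ((p : ℤ) - 1)

/-- The lower alphabet `{0, 1, …, q−1}`. -/
def LowAlph (q : ℕ) : Set ℤ := Set.Icc 0 ((q : ℤ) - 1)

/-- The upper alphabet `{p−q, …, p−1}`. -/
def UpAlph (p q : ℕ) : Set ℤ := Set.Icc ((p : ℤ) - q) ((p : ℤ) - 1)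

/-- The alphabet `D = {p−2q+1, …, p−1}` of the automaton `S_{p/q}`. -/
def Dalph (p q : ℕ) : Set ℤ := Set.Icc ((p : ℤ) - 2 * q + 1) ((p : ℤ) - 1)

/-- Evaluation after the radix point: `ρ(w) = Σ_{i≥1} (w_i/q)·(q/p)^i`
(here `w k` is the `(k+1)`-st digit). -/
noncomputable def rho (p q : ℕ) (w : ℕ → ℤ) : ℝ :=
  ∑' i : ℕ, ((w i : ℝ) / q) * ((q : ℝ) / p) ^ (i + 1)

/-- The unique digit in `{0,…,q-1}` making `p*m + d + digit` divisible by `q`. -/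
def sdig (p q : ℕ) (d : ℤ) (m : ℕ) : ℤ := (-((p : ℤ) * m + d)) % q

/-- The next state. -/
def snxt (p q : ℕ) (d : ℤ) (m : ℕ) : ℕ :=
  (((p : ℤ) * m + d + sdig p q d m) / q).toNat

/-- The run of states. -/
def sstates (p q : ℕ) (d : ℕ → ℤ) (n : ℕ) : ℕ → ℕ
  | 0 => n
  | k + 1 => snxt p q (d k) (sstates p q d n k)

lemma sdig_mem {q : ℕ} (hq : 0 < q) (p : ℕ) (d : ℤ) (m : ℕ) :
    0 ≤ sdig p q d m ∧ sdig p q d m ≤ (q : ℤ) - 1 := by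
  have hq' : (0 : ℤ) < q := by exact_mod_cast hq
  unfold sdig
  have h1 := Int.emod_nonneg (-((p : ℤ) * m + d)) (by omega : (q : ℤ) ≠ 0)
  have h2 := Int.emod_lt_of_pos (-((p : ℤ) * m + d)) hq'
  omega

lemma sdvd (p q : ℕ) (d : ℤ) (m : ℕ) :
    (q : ℤ) ∣ ((p : ℤ) * m + d + sdig p q d m) := by
  refine ⟨-((-((p : ℤ) * m + d)) / q), ?_⟩
  have h := Int.emod_def (-((p : ℤ) * m + d)) q
  unfold sdig
  rw [h]; ring

lemma stot_nonneg {q : ℕ} (hq : 0 < q) (p : ℕ) {d : ℤ} (hd : 1 - (q : ℤ) ≤ d) (m : ℕ) :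
    0 ≤ (p : ℤ) * m + d + sdig p q d m := by
  have hq' : (0 : ℤ) < q := by exact_mod_cast hq
  obtain ⟨c, hc⟩ := sdvd p q d m
  have hdig := sdig_mem hq p d m
  have hm : (0 : ℤ) ≤ (p : ℤ) * m := by positivity
  have hgt : -(q : ℤ) < (q : ℤ) * c := by rw [← hc]; omega
  have hc1 : (0 : ℤ) ≤ c := by
    by_contra h
    push_neg at h
    have : c ≤ -1 := by omega
    nlinarith
  rw [hc]
  exact mul_nonneg hq'.le hc1

lemma snxt_eq {q : ℕ} (hq : 0 < q) (p : ℕ) {d : ℤ} (hd : 1 - (q : ℤ) ≤ d) (m : ℕ) :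
    (q : ℤ) * snxt p q d m = (p : ℤ) * m + sdig p q d m + d := by
  have hq' : (0 : ℤ) < q := by exact_mod_cast hq
  have hnn := stot_nonneg hq p hd m
  have hdvd := sdvd p q d m
  unfold snxt
  rw [Int.toNat_of_nonneg (Int.ediv_nonneg hnn hq'.le),
    Int.mul_ediv_cancel' hdvd]
  ring

lemma scancel {q : ℕ} (hq : 0 < q) {a b : ℕ} {T x y : ℤ}
    (ha : (q : ℤ) * a = T + x) (hb : (q : ℤ) * b = T + y)
    (hx0 : 0 ≤ x) (hx1 : x ≤ (q : ℤ) - 1) (hy0 : 0 ≤ y) (hy1 : y ≤ (q : ℤ) - 1) :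
    a = b ∧ x = y := by
  have hq' : (0 : ℤ) < q := by exact_mod_cast hq
  have hc : (q : ℤ) * ((a : ℤ) - b) = x - y := by rw [mul_sub]; linarith
  have hab : (a : ℤ) = b := by
    rcases lt_trichotomy ((a : ℤ) - b) 0 with h | h | h
    · have : (a : ℤ) - b ≤ -1 := by omega
      nlinarith
    · omega
    · have : (1 : ℤ) ≤ (a : ℤ) - b := by omega
      nlinarith
  have : a = b := by exact_mod_cast hab
  refine ⟨this, ?_⟩
  rw [hab] at hc
  simp at hc
  omega

lemma key (p q : ℕ) (hq : 1 < q) (n : ℕ) (d : ℕ → ℤ) (hd : ∀ k, 1 - (q : ℤ) ≤ d k) :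
    ∃! x : ℕ → ℤ, (∀ k, x k ∈ LowAlph q) ∧
      ∃ s : ℕ → ℕ, s 0 = n ∧
        ∀ k : ℕ, (q : ℤ) * s (k + 1) = p * s k + x k + d k := by
  have hq0 : 0 < q := by omega
  set S : ℕ → ℕ := sstates p q d n with hS
  have hSrec : ∀ k, (q : ℤ) * S (k + 1) = p * S k + sdig p q (d k) (S k) + d k := by
    intro k
    show (q : ℤ) * snxt p q (d k) (S k) = _
    exact snxt_eq hq0 p (hd k) (S k)
  refine ⟨fun k => sdig p q (d k) (S k),
    ⟨fun k => ⟨(sdig_mem hq0 p (d k) (S k)).1, (sdig_mem hq0 p (d k) (S k)).2⟩,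
      S, rfl, hSrec⟩, ?_⟩
  rintro x ⟨hxE, s, hs0, hrec⟩
  have hstates : ∀ k, s k = S k := by
    intro k
    induction k with
    | zero => exact hs0
    | succ k ih =>
      have ha : (q : ℤ) * s (k + 1) = ((p : ℤ) * S k + d k) + x k := by
        rw [hrec k, ih]; ring
      have hb : (q : ℤ) * S (k + 1) = ((p : ℤ) * S k + d k) + sdig p q (d k) (S k) := by
        rw [hSrec k]; ring
      have hdig := sdig_mem hq0 p (d k) (S k)
      exact (scancel hq0 ha hb (hxE k).1 (hxE k).2 hdig.1 hdig.2).1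
  funext k
  have ha : (q : ℤ) * s (k + 1) = ((p : ℤ) * S k + d k) + x k := by
    rw [hrec k, hstates k]; ring
  have hb : (q : ℤ) * S (k + 1) = ((p : ℤ) * S k + d k) + sdig p q (d k) (S k) := by
    rw [hSrec k]; ring
  have hdig := sdig_mem hq0 p (d k) (S k)
  exact (scancel hq0 ha hb (hxE k).1 (hxE k).2 hdig.1 hdig.2).2

theorem stmt10 (p q : ℕ) (hco : Nat.Coprime p q) (hq : 1 < q) (hpq : q < p)
    (n : ℕ) (w : ℕ → ℤ) (hw : ∀ k, w k ∈ LowAlph q) :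
    (∃! v : ℕ → ℤ, (∀ k, v k ∈ LowAlph q) ∧
      ∃ s : ℕ → ℕ, s 0 = n ∧
        ∀ k : ℕ, (q : ℤ) * s (k + 1) = p * s k + (v k - w k) + ((p : ℤ) - q)) ∧
    (∃! u : ℕ → ℤ, (∀ k, u k ∈ LowAlph q) ∧
      ∃ s : ℕ → ℕ, s 0 = n ∧
        ∀ k : ℕ, (q : ℤ) * s (k + 1) = p * s k + (w k - u k) + ((p : ℤ) - q)) := by
  have hwb : ∀ k, 0 ≤ w k ∧ w k ≤ (q : ℤ) - 1 := by
    intro k; exact ⟨(hw k).1, (hw k).2⟩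
  have hqp : (q : ℤ) < p := by exact_mod_cast hpq
  constructor
  · -- part (a): v k + (p - q - w k)
    obtain ⟨x, ⟨hxE, s, hs0, hseq⟩, huniq⟩ :=
      key p q hq n (fun k => (p : ℤ) - q - w k)
        (fun k => by show 1 - (q : ℤ) ≤ (p : ℤ) - q - w k; have := hwb k; omega)
    refine ⟨x, ⟨hxE, s, hs0, fun k => by rw [hseq k]; ring⟩, ?_⟩
    rintro v ⟨hvE, s', hs0', heq'⟩
    exact huniq v ⟨hvE, s', hs0', fun k => by rw [heq' k]; ring⟩
  · -- part (b): substitute x k = q - 1 - u k, so w k - u k + p - q = x k + (w k + p - 2q + 1)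
    obtain ⟨x, ⟨hxE, s, hs0, hseq⟩, huniq⟩ :=
      key p q hq n (fun k => w k + (p : ℤ) - 2 * q + 1)
        (fun k => by show 1 - (q : ℤ) ≤ w k + (p : ℤ) - 2 * q + 1; have := hwb k; omega)
    refine ⟨fun k => (q : ℤ) - 1 - x k, ⟨fun k => by
        have h1 := (hxE k).1; have h2 := (hxE k).2
        show (q : ℤ) - 1 - x k ∈ Set.Icc 0 ((q : ℤ) - 1)
        simp only [Set.mem_Icc]; omega,
      s, hs0, fun k => by rw [hseq k]; ring⟩, ?_⟩
    rintro u ⟨huE, s', hs0', heq'⟩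
    have hxeq : (fun k => (q : ℤ) - 1 - u k) = x := by
      refine huniq _ ⟨fun k => by
          have h1 := (huE k).1; have h2 := (huE k).2
          show (q : ℤ) - 1 - u k ∈ Set.Icc 0 ((q : ℤ) - 1)
          simp only [Set.mem_Icc]; omega,
        s', hs0', fun k => by rw [heq' k]; ring⟩
    funext k
    have := congrFun hxeq k
    omega
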